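/- Let b_1,…,b_L ∈ ℂ^K with ‖b_l‖² = K/L ≤ 1 for every l and Σ_{l=1}^L b_l b_l* = I_K. Let x_1,…,x_s ∈ ℂ^N with ‖x_i‖ = 1 for all i, and for h = (h_1,…,h_s) ∈ ℂ^{Ks} define σ_max(h,x) = max_{1≤l≤L} √(Σ_{i=1}^s |b_l*h_i|²). Then: (i) for any h, u ∈ ℂ^{Ks}, |σ_max(h,x) − σ_max(u,x)| ≤ ‖h − u‖; (ii) if moreover ‖h‖ = ‖u‖ = 1, then |σ_max²(h,x) − σ_max²(u,x)| ≤ 2‖h − u‖; and (iii) if ‖h‖ = 1 then 1/L ≤ σ_max²(h,x) ≤ K/L. -/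

import Mathlib

noncomputable section
open Finset ComplexConjugate

namespace RGD

/-- Squared Euclidean norm of a complex vector. -/
def vnormSq {n : ℕ} (v : Fin n → ℂ) : ℝ := ∑ j, ‖v j‖ ^ 2

/-- Euclidean norm of a complex vector. -/
def vnorm {n : ℕ} (v : Fin n → ℂ) : ℝ := Real.sqrt (vnormSq v)

/-- Inner product, conjugate-linear in the first argument. -/
def vinner {n : ℕ} (u v : Fin n → ℂ) : ℂ := ∑ j, conj (u j) * v j

/-- Squared Frobenius norm of a matrix. -/
def frobSq {K N : ℕ} (Z : Matrix (Fin K) (Fin N) ℂ) : ℝ := ∑ k, ∑ j, ‖Z k j‖ ^ 2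

/-- Frobenius norm of a matrix. -/
def frob {K N : ℕ} (Z : Matrix (Fin K) (Fin N) ℂ) : ℝ := Real.sqrt (frobSq Z)

/-- Frobenius inner product `⟨U,V⟩ = Tr(U*V)`, conjugate-linear in the first argument. -/
def finner {K N : ℕ} (U V : Matrix (Fin K) (Fin N) ℂ) : ℂ := ∑ k, ∑ j, conj (U k j) * V k j

/-- Spectral (operator) norm of a matrix: sup of `‖Zv‖` over the closed unit ball. -/
def opNorm {K N : ℕ} (Z : Matrix (Fin K) (Fin N) ℂ) : ℝ :=
  sSup {r : ℝ | ∃ v : Fin N → ℂ, vnorm v ≤ 1 ∧ r = vnorm (Z.mulVec v)}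

/-- Squared Frobenius norm of a block-diagonal matrix, given by its diagonal blocks. -/
def famFrobSq {K N s : ℕ} (Z : Fin s → Matrix (Fin K) (Fin N) ℂ) : ℝ := ∑ i, frobSq (Z i)

/-- Frobenius norm of a block-diagonal matrix, given by its diagonal blocks. -/
def famFrob {K N s : ℕ} (Z : Fin s → Matrix (Fin K) (Fin N) ℂ) : ℝ := Real.sqrt (famFrobSq Z)

/-- The rank-one matrix `u v*`. -/
def rankOne {K N : ℕ} (u : Fin K → ℂ) (v : Fin N → ℂ) : Matrix (Fin K) (Fin N) ℂ :=
  Matrix.of fun k j => u k * conj (v j)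

/-- `ℋ(h,x)`: block-diagonal matrix with `i`-th block `hᵢ xᵢ*`. -/
def Hmap {K N s : ℕ} (h : Fin s → Fin K → ℂ) (x : Fin s → Fin N → ℂ) :
    Fin s → Matrix (Fin K) (Fin N) ℂ := fun i => rankOne (h i) (x i)

/-- `𝒜ᵢ(Z) = (bₗ* Z aₗ)ₗ`. -/
def calAi {K N L : ℕ} (b : Fin L → Fin K → ℂ) (a : Fin L → Fin N → ℂ)
    (Z : Matrix (Fin K) (Fin N) ℂ) : Fin L → ℂ :=
  fun l => vinner (b l) (Z.mulVec (a l))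

/-- `𝒜(Z) = Σᵢ 𝒜ᵢ(Zᵢ)` on block-diagonal matrices. -/
def calA {K N L s : ℕ} (b : Fin L → Fin K → ℂ) (a : Fin s → Fin L → Fin N → ℂ)
    (Z : Fin s → Matrix (Fin K) (Fin N) ℂ) : Fin L → ℂ :=
  fun l => ∑ i, calAi b (a i) (Z i) l

/-- `𝒜ᵢ*(z) = Σₗ zₗ bₗ aₗ*`. -/
def calAdj {K N L : ℕ} (b : Fin L → Fin K → ℂ) (a : Fin L → Fin N → ℂ)
    (z : Fin L → ℂ) : Matrix (Fin K) (Fin N) ℂ :=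
  Matrix.of fun k j => ∑ l, z l * b l k * conj (a l j)

/-- `‖𝒜*(e)‖ = maxᵢ ‖𝒜ᵢ*(e)‖` (operator norms). -/
def AadjNorm {K N L s : ℕ} (b : Fin L → Fin K → ℂ) (a : Fin s → Fin L → Fin N → ℂ)
    (e : Fin L → ℂ) : ℝ :=
  ⨆ i : Fin s, opNorm (calAdj b (a i) e)

/-- `B*B = I_K`, expressed in terms of the columns `bₗ` of `B*`. -/
def BtBeqI {K L : ℕ} (b : Fin L → Fin K → ℂ) : Prop :=
  ∀ k k' : Fin K, (∑ l, b l k * conj (b l k')) = if k = k' then (1 : ℂ) else 0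

/-- `μ ≥ μ_h`, i.e. `√L ‖B h_{i0}‖_∞ ≤ μ ‖h_{i0}‖` for all `i`. -/
def muhLe {K L s : ℕ} (b : Fin L → Fin K → ℂ) (h0 : Fin s → Fin K → ℂ) (μ : ℝ) : Prop :=
  ∀ i l, Real.sqrt L * ‖vinner (b l) (h0 i)‖ ≤ μ * vnorm (h0 i)

/-- `d₀ = √(Σᵢ d_{i0}²)`. -/
def dtot {s : ℕ} (d0 : Fin s → ℝ) : ℝ := Real.sqrt (∑ i, d0 i ^ 2)

/-- Condition number `κ = (maxᵢ d_{i0}) / (minᵢ d_{i0})`. -/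
def kappa {s : ℕ} (d0 : Fin s → ℝ) : ℝ := (⨆ i, d0 i) / (⨅ i, d0 i)

/-- The observation `y = 𝒜(ℋ(h₀,x₀)) + e`. -/
def yvec {K N L s : ℕ} (b : Fin L → Fin K → ℂ) (a : Fin s → Fin L → Fin N → ℂ)
    (h0 : Fin s → Fin K → ℂ) (x0 : Fin s → Fin N → ℂ) (e : Fin L → ℂ) : Fin L → ℂ :=
  fun l => calA b a (Hmap h0 x0) l + e l

/-- `F(h,x) = ‖𝒜(ℋ(h,x)) − y‖²`. -/
def Fobj {K N L s : ℕ} (b : Fin L → Fin K → ℂ) (a : Fin s → Fin L → Fin N → ℂ)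
    (h0 : Fin s → Fin K → ℂ) (x0 : Fin s → Fin N → ℂ) (e : Fin L → ℂ)
    (h : Fin s → Fin K → ℂ) (x : Fin s → Fin N → ℂ) : ℝ :=
  vnormSq (fun l => calA b a (Hmap h x) l - yvec b a h0 x0 e l)

def G0 (z : ℝ) : ℝ := max (z - 1) 0 ^ 2

def G0' (z : ℝ) : ℝ := 2 * max (z - 1) 0

/-- The `i`-th regularizer `Gᵢ(hᵢ,xᵢ)` (including the factor `ρ`). -/
def Gi {K N L : ℕ} (b : Fin L → Fin K → ℂ) (ρ μ di : ℝ)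
    (hi : Fin K → ℂ) (xi : Fin N → ℂ) : ℝ :=
  ρ * (G0 (vnormSq hi / (2 * di)) + G0 (vnormSq xi / (2 * di))
    + ∑ l, G0 ((L : ℝ) * ‖vinner (b l) hi‖ ^ 2 / (8 * di * μ ^ 2)))

/-- The regularizer `G(h,x) = Σᵢ Gᵢ(hᵢ,xᵢ)`. -/
def Greg {K N L s : ℕ} (b : Fin L → Fin K → ℂ) (ρ μ : ℝ) (dd : Fin s → ℝ)
    (h : Fin s → Fin K → ℂ) (x : Fin s → Fin N → ℂ) : ℝ :=
  ∑ i, Gi b ρ μ (dd i) (h i) (x i)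

/-- `F̃ = F + G`. -/
def Ftil {K N L s : ℕ} (b : Fin L → Fin K → ℂ) (a : Fin s → Fin L → Fin N → ℂ)
    (h0 : Fin s → Fin K → ℂ) (x0 : Fin s → Fin N → ℂ) (e : Fin L → ℂ)
    (ρ μ : ℝ) (dd : Fin s → ℝ)
    (h : Fin s → Fin K → ℂ) (x : Fin s → Fin N → ℂ) : ℝ :=
  Fobj b a h0 x0 e h x + Greg b ρ μ dd h x

/-- The residual `𝒜(ℋ(h,x)) − y`. -/
def residual {K N L s : ℕ} (b : Fin L → Fin K → ℂ) (a : Fin s → Fin L → Fin N → ℂ)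
    (h0 : Fin s → Fin K → ℂ) (x0 : Fin s → Fin N → ℂ) (e : Fin L → ℂ)
    (h : Fin s → Fin K → ℂ) (x : Fin s → Fin N → ℂ) : Fin L → ℂ :=
  fun l => calA b a (Hmap h x) l - yvec b a h0 x0 e l

/-- Wirtinger gradient `∇F_{hᵢ} = 𝒜ᵢ*(𝒜(ℋ(h,x)) − y) xᵢ`. -/
def gradFh {K N L s : ℕ} (b : Fin L → Fin K → ℂ) (a : Fin s → Fin L → Fin N → ℂ)
    (h0 : Fin s → Fin K → ℂ) (x0 : Fin s → Fin N → ℂ) (e : Fin L → ℂ)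
    (h : Fin s → Fin K → ℂ) (x : Fin s → Fin N → ℂ) (i : Fin s) : Fin K → ℂ :=
  (calAdj b (a i) (residual b a h0 x0 e h x)).mulVec (x i)

/-- Wirtinger gradient `∇F_{xᵢ} = (𝒜ᵢ*(𝒜(ℋ(h,x)) − y))* hᵢ`. -/
def gradFx {K N L s : ℕ} (b : Fin L → Fin K → ℂ) (a : Fin s → Fin L → Fin N → ℂ)
    (h0 : Fin s → Fin K → ℂ) (x0 : Fin s → Fin N → ℂ) (e : Fin L → ℂ)
    (h : Fin s → Fin K → ℂ) (x : Fin s → Fin N → ℂ) (i : Fin s) : Fin N → ℂ :=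
  (calAdj b (a i) (residual b a h0 x0 e h x)).conjTranspose.mulVec (h i)

/-- Wirtinger gradient `∇G_{hᵢ}`. -/
def gradGh {K L s : ℕ} (b : Fin L → Fin K → ℂ) (ρ μ : ℝ) (dd : Fin s → ℝ)
    (h : Fin s → Fin K → ℂ) (i : Fin s) : Fin K → ℂ :=
  fun k => ((ρ / (2 * dd i) : ℝ) : ℂ) *
    (((G0' (vnormSq (h i) / (2 * dd i)) : ℝ) : ℂ) * h i k
      + (((L : ℝ) / (4 * μ ^ 2) : ℝ) : ℂ) *
        ∑ l, ((G0' ((L : ℝ) * ‖vinner (b l) (h i)‖ ^ 2 / (8 * dd i * μ ^ 2)) : ℝ) : ℂ)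
          * (vinner (b l) (h i) * b l k))

/-- Wirtinger gradient `∇G_{xᵢ}`. -/
def gradGx {N s : ℕ} (ρ : ℝ) (dd : Fin s → ℝ)
    (x : Fin s → Fin N → ℂ) (i : Fin s) : Fin N → ℂ :=
  fun j => ((ρ / (2 * dd i) : ℝ) : ℂ) * (((G0' (vnormSq (x i) / (2 * dd i)) : ℝ) : ℂ) * x i j)

/-- `∇F̃_{hᵢ} = ∇F_{hᵢ} + ∇G_{hᵢ}`. -/
def gradH {K N L s : ℕ} (b : Fin L → Fin K → ℂ) (a : Fin s → Fin L → Fin N → ℂ)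
    (h0 : Fin s → Fin K → ℂ) (x0 : Fin s → Fin N → ℂ) (e : Fin L → ℂ)
    (ρ μ : ℝ) (dd : Fin s → ℝ)
    (h : Fin s → Fin K → ℂ) (x : Fin s → Fin N → ℂ) (i : Fin s) : Fin K → ℂ :=
  fun k => gradFh b a h0 x0 e h x i k + gradGh b ρ μ dd h i k

/-- `∇F̃_{xᵢ} = ∇F_{xᵢ} + ∇G_{xᵢ}`. -/
def gradX {K N L s : ℕ} (b : Fin L → Fin K → ℂ) (a : Fin s → Fin L → Fin N → ℂ)
    (h0 : Fin s → Fin K → ℂ) (x0 : Fin s → Fin N → ℂ) (e : Fin L → ℂ)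
    (ρ μ : ℝ) (dd : Fin s → ℝ)
    (h : Fin s → Fin K → ℂ) (x : Fin s → Fin N → ℂ) (i : Fin s) : Fin N → ℂ :=
  fun j => gradFx b a h0 x0 e h x i j + gradGx ρ dd x i j

/-- `‖∇F̃(h,x)‖²` (squared norm of the stacked Wirtinger gradient). -/
def gradNormSq {K N L s : ℕ} (b : Fin L → Fin K → ℂ) (a : Fin s → Fin L → Fin N → ℂ)
    (h0 : Fin s → Fin K → ℂ) (x0 : Fin s → Fin N → ℂ) (e : Fin L → ℂ)
    (ρ μ : ℝ) (dd : Fin s → ℝ)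
    (h : Fin s → Fin K → ℂ) (x : Fin s → Fin N → ℂ) : ℝ :=
  ∑ i, vnormSq (gradH b a h0 x0 e ρ μ dd h x i) + ∑ i, vnormSq (gradX b a h0 x0 e ρ μ dd h x i)

/-- `‖∇F̃(h',x') − ∇F̃(h,x)‖²`. -/
def gradDiffNormSq {K N L s : ℕ} (b : Fin L → Fin K → ℂ) (a : Fin s → Fin L → Fin N → ℂ)
    (h0 : Fin s → Fin K → ℂ) (x0 : Fin s → Fin N → ℂ) (e : Fin L → ℂ)
    (ρ μ : ℝ) (dd : Fin s → ℝ)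
    (h : Fin s → Fin K → ℂ) (x : Fin s → Fin N → ℂ)
    (h' : Fin s → Fin K → ℂ) (x' : Fin s → Fin N → ℂ) : ℝ :=
  ∑ i, vnormSq (fun k => gradH b a h0 x0 e ρ μ dd h' x' i k - gradH b a h0 x0 e ρ μ dd h x i k)
  + ∑ i, vnormSq (fun j => gradX b a h0 x0 e ρ μ dd h' x' i j - gradX b a h0 x0 e ρ μ dd h x i j)

/-- Membership in `𝒩_d`. -/
def inNd {K N s : ℕ} (d0 : Fin s → ℝ)
    (h : Fin s → Fin K → ℂ) (x : Fin s → Fin N → ℂ) : Prop :=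
  ∀ i, vnorm (h i) ≤ 2 * Real.sqrt (d0 i) ∧ vnorm (x i) ≤ 2 * Real.sqrt (d0 i)

/-- Membership in `𝒩_μ`. -/
def inNmu {K L s : ℕ} (b : Fin L → Fin K → ℂ) (d0 : Fin s → ℝ) (μ : ℝ)
    (h : Fin s → Fin K → ℂ) : Prop :=
  ∀ i, ∀ l, Real.sqrt L * ‖vinner (b l) (h i)‖ ≤ 4 * Real.sqrt (d0 i) * μ

/-- `δᵢ(hᵢ,xᵢ) = ‖hᵢxᵢ* − h_{i0}x_{i0}*‖_F / d_{i0}`. -/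
def deltaI {K N : ℕ} (h0i : Fin K → ℂ) (x0i : Fin N → ℂ) (d0i : ℝ)
    (hi : Fin K → ℂ) (xi : Fin N → ℂ) : ℝ :=
  frob (rankOne hi xi - rankOne h0i x0i) / d0i

/-- Membership in `𝒩_ε`. -/
def inNeps {K N s : ℕ} (h0 : Fin s → Fin K → ℂ) (x0 : Fin s → Fin N → ℂ)
    (d0 : Fin s → ℝ) (ε : ℝ)
    (h : Fin s → Fin K → ℂ) (x : Fin s → Fin N → ℂ) : Prop :=
  ∀ i, deltaI (h0 i) (x0 i) (d0 i) (h i) (x i) ≤ ε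

/-- The global relative error `δ(h,x) = ‖ℋ(h,x) − X₀‖_F / d₀`. -/
def deltaTot {K N s : ℕ} (h0 : Fin s → Fin K → ℂ) (x0 : Fin s → Fin N → ℂ)
    (d0 : Fin s → ℝ)
    (h : Fin s → Fin K → ℂ) (x : Fin s → Fin N → ℂ) : ℝ :=
  famFrob (fun i => Hmap h x i - Hmap h0 x0 i) / dtot d0

/-- Membership in `𝒩_F̃`. -/
def inNF {K N L s : ℕ} (b : Fin L → Fin K → ℂ) (a : Fin s → Fin L → Fin N → ℂ)
    (h0 : Fin s → Fin K → ℂ) (x0 : Fin s → Fin N → ℂ) (e : Fin L → ℂ)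
    (d0 : Fin s → ℝ) (ρ μ : ℝ) (dd : Fin s → ℝ) (ε : ℝ)
    (h : Fin s → Fin K → ℂ) (x : Fin s → Fin N → ℂ) : Prop :=
  Ftil b a h0 x0 e ρ μ dd h x ≤ ε ^ 2 * dtot d0 ^ 2 / (3 * (s : ℝ) * kappa d0 ^ 2) + vnormSq e

/-- The Local Restricted Isometry Property on `𝒩_d ∩ 𝒩_μ ∩ 𝒩_ε`. -/
def LocalRIP {K N L s : ℕ} (b : Fin L → Fin K → ℂ) (a : Fin s → Fin L → Fin N → ℂ)
    (h0 : Fin s → Fin K → ℂ) (x0 : Fin s → Fin N → ℂ)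
    (d0 : Fin s → ℝ) (μ ε : ℝ) : Prop :=
  ∀ (h : Fin s → Fin K → ℂ) (x : Fin s → Fin N → ℂ),
    inNd d0 h x → inNmu b d0 μ h → inNeps h0 x0 d0 ε h x →
      (2 / 3) * famFrobSq (fun i => Hmap h x i - Hmap h0 x0 i)
          ≤ vnormSq (calA b a fun i => Hmap h x i - Hmap h0 x0 i)
      ∧ vnormSq (calA b a fun i => Hmap h x i - Hmap h0 x0 i)
          ≤ (3 / 2) * famFrobSq (fun i => Hmap h x i - Hmap h0 x0 i)

/-- `α_{i1} = ⟨h_{i0}, hᵢ⟩ / d_{i0}`. -/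
def alpha1 {K s : ℕ} (h0 : Fin s → Fin K → ℂ) (d0 : Fin s → ℝ)
    (h : Fin s → Fin K → ℂ) (i : Fin s) : ℂ :=
  vinner (h0 i) (h i) / ((d0 i : ℝ) : ℂ)

/-- `α_{i2} = ⟨x_{i0}, xᵢ⟩ / d_{i0}`. -/
def alpha2 {N s : ℕ} (x0 : Fin s → Fin N → ℂ) (d0 : Fin s → ℝ)
    (x : Fin s → Fin N → ℂ) (i : Fin s) : ℂ :=
  vinner (x0 i) (x i) / ((d0 i : ℝ) : ℂ)

/-- `δ₀ = δ/10`. -/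
def delta0 {K N s : ℕ} (h0 : Fin s → Fin K → ℂ) (x0 : Fin s → Fin N → ℂ)
    (d0 : Fin s → ℝ) (h : Fin s → Fin K → ℂ) (x : Fin s → Fin N → ℂ) : ℝ :=
  deltaTot h0 x0 d0 h x / 10

/-- `αᵢ = (1−δ₀)α_{i1}` if `‖hᵢ‖ ≥ ‖xᵢ‖`, else `1/((1−δ₀) conj(α_{i2}))`. -/
def alphaC {K N s : ℕ} (h0 : Fin s → Fin K → ℂ) (x0 : Fin s → Fin N → ℂ)
    (d0 : Fin s → ℝ) (h : Fin s → Fin K → ℂ) (x : Fin s → Fin N → ℂ) (i : Fin s) : ℂ :=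
  if vnorm (x i) ≤ vnorm (h i)
  then ((1 - delta0 h0 x0 d0 h x : ℝ) : ℂ) * alpha1 h0 d0 h i
  else 1 / (((1 - delta0 h0 x0 d0 h x : ℝ) : ℂ) * conj (alpha2 x0 d0 x i))

/-- `Δhᵢ = hᵢ − αᵢ h_{i0}`. -/
def dh {K N s : ℕ} (h0 : Fin s → Fin K → ℂ) (x0 : Fin s → Fin N → ℂ)
    (d0 : Fin s → ℝ) (h : Fin s → Fin K → ℂ) (x : Fin s → Fin N → ℂ) (i : Fin s) :
    Fin K → ℂ :=
  fun k => h i k - alphaC h0 x0 d0 h x i * h0 i k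

/-- `Δxᵢ = xᵢ − conj(αᵢ)⁻¹ x_{i0}`. -/
def dx {K N s : ℕ} (h0 : Fin s → Fin K → ℂ) (x0 : Fin s → Fin N → ℂ)
    (d0 : Fin s → ℝ) (h : Fin s → Fin K → ℂ) (x : Fin s → Fin N → ℂ) (i : Fin s) :
    Fin N → ℂ :=
  fun j => x i j - (conj (alphaC h0 x0 d0 h x i))⁻¹ * x0 i j

/-- `σ²_max(h,x) = maxₗ Σᵢ |bₗ*hᵢ|² ‖xᵢ‖²`. -/
def sigmaMaxSq {K N L s : ℕ} (b : Fin L → Fin K → ℂ)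
    (h : Fin s → Fin K → ℂ) (x : Fin s → Fin N → ℂ) : ℝ :=
  ⨆ l : Fin L, ∑ i, ‖vinner (b l) (h i)‖ ^ 2 * vnormSq (x i)

/-- The rank-one bound (Lemma: `𝒜` on block-diagonal matrices with rank-1 blocks). -/
def RankOneBound {K N L s : ℕ} (b : Fin L → Fin K → ℂ)
    (a : Fin s → Fin L → Fin N → ℂ) : Prop :=
  ∀ (h : Fin s → Fin K → ℂ) (x : Fin s → Fin N → ℂ),
    vnormSq (calA b a (Hmap h x)) ≤
      4 / 3 * famFrobSq (Hmap h x)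
      + 2 * Real.sqrt (2 * (s : ℝ) * famFrobSq (Hmap h x) * sigmaMaxSq b h x
          * ((K : ℝ) + N) * Real.log L)
      + 8 * (s : ℝ) * sigmaMaxSq b h x * ((K : ℝ) + N) * Real.log L

/-- The subspace `Tᵢ = {h_{i0} v* + u x_{i0}*}`. -/
def Tspace {K N : ℕ} (h0i : Fin K → ℂ) (x0i : Fin N → ℂ) :
    Set (Matrix (Fin K) (Fin N) ℂ) :=
  {Z | ∃ (u : Fin K → ℂ) (v : Fin N → ℂ), Z = rankOne h0i v + rankOne u x0i}

/-- `P` is the orthogonal projection onto `Tᵢ` w.r.t. the Frobenius inner product. -/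
def IsFrobProj {K N : ℕ} (h0i : Fin K → ℂ) (x0i : Fin N → ℂ)
    (P : Matrix (Fin K) (Fin N) ℂ → Matrix (Fin K) (Fin N) ℂ) : Prop :=
  ∀ Z, P Z ∈ Tspace h0i x0i ∧ ∀ W ∈ Tspace h0i x0i, finner W (Z - P Z) = 0

/-- Operator norm of `𝒜ᵢ` from `(ℂ^{K×N}, ‖·‖_F)` to `(ℂ^L, ‖·‖)`. -/
def calAiOpNorm {K N L : ℕ} (b : Fin L → Fin K → ℂ) (a : Fin L → Fin N → ℂ) : ℝ :=
  sSup {r : ℝ | ∃ Z : Matrix (Fin K) (Fin N) ℂ, frob Z ≤ 1 ∧ r = vnorm (calAi b a Z)}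

/-- Operator norm of `𝒜` from block-diagonal matrices with `‖·‖_F` to `ℂ^L`. -/
def calAOpNorm {K N L s : ℕ} (b : Fin L → Fin K → ℂ)
    (a : Fin s → Fin L → Fin N → ℂ) : ℝ :=
  sSup {r : ℝ | ∃ Z : Fin s → Matrix (Fin K) (Fin N) ℂ, famFrob Z ≤ 1 ∧ r = vnorm (calA b a Z)}

/-- Norm of a stacked vector in `ℂ^{ns}`. -/
def stackNorm {n s : ℕ} (u : Fin s → Fin n → ℂ) : ℝ := Real.sqrt (∑ i, vnormSq (u i))

/-- Norm of a point `z = (h,x) ∈ ℂ^{s(K+N)}`. -/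
def pairNorm {K N s : ℕ} (u : Fin s → Fin K → ℂ) (v : Fin s → Fin N → ℂ) : ℝ :=
  Real.sqrt (∑ i, vnormSq (u i) + ∑ i, vnormSq (v i))

/-- `z + t • w` componentwise, `t` real. -/
def shiftV {n s : ℕ} (u w : Fin s → Fin n → ℂ) (t : ℝ) : Fin s → Fin n → ℂ :=
  fun i k => u i k + (t : ℂ) * w i k

/-- `σ_max(h) = maxₗ √(Σᵢ |bₗ*hᵢ|²)` (unit `xᵢ`'s). -/
def sigmaMaxU {K L s : ℕ} (b : Fin L → Fin K → ℂ) (h : Fin s → Fin K → ℂ) : ℝ :=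
  ⨆ l, Real.sqrt (∑ i, ‖vinner (b l) (h i)‖ ^ 2)

section Aux16

private lemma vnormSq_nonneg' {n : ℕ} (v : Fin n → ℂ) : 0 ≤ vnormSq v :=
  Finset.sum_nonneg fun _ _ => sq_nonneg _

private lemma vnorm_eq_norm {n : ℕ} (v : Fin n → ℂ) :
    vnorm v = ‖(WithLp.equiv 2 (Fin n → ℂ)).symm v‖ := by
  rw [vnorm, vnormSq, EuclideanSpace.norm_eq]; rfl

private lemma vinner_eq_inner {n : ℕ} (u v : Fin n → ℂ) :
    vinner u v = @inner ℂ _ _ ((WithLp.equiv 2 (Fin n → ℂ)).symm u)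
      ((WithLp.equiv 2 (Fin n → ℂ)).symm v) := by
  simp [vinner, PiLp.inner_apply, RCLike.inner_apply, mul_comm]

private lemma norm_vinner_le' {n : ℕ} (u v : Fin n → ℂ) :
    ‖vinner u v‖ ≤ vnorm u * vnorm v := by
  rw [vinner_eq_inner, vnorm_eq_norm, vnorm_eq_norm]
  exact norm_inner_le_norm _ _

private lemma sum_sq_vinner {K L : ℕ} (b : Fin L → Fin K → ℂ) (hb : BtBeqI b)
    (v : Fin K → ℂ) : ∑ l, ‖vinner (b l) v‖ ^ 2 = vnormSq v := by
  have key : ∀ z : ℂ, ((‖z‖ ^ 2 : ℝ) : ℂ) = conj z * z := by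
    intro z; rw [RCLike.conj_mul]; norm_cast
  apply Complex.ofReal_injective
  push_cast
  have e1 : ∀ l : Fin L, ((‖vinner (b l) v‖ : ℂ)) ^ 2
      = ∑ j, ∑ j', (conj (v j) * v j') * (b l j * conj (b l j')) := by
    intro l
    have : ((‖vinner (b l) v‖ : ℂ)) ^ 2 = conj (vinner (b l) v) * vinner (b l) v := by
      rw [← key]; push_cast; ring
    rw [this, vinner, map_sum, Finset.sum_mul_sum]
    refine Finset.sum_congr rfl fun j _ => Finset.sum_congr rfl fun j' _ => ?_
    simp only [map_mul, Complex.conj_conj]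
    ring
  calc (∑ l, ((‖vinner (b l) v‖ : ℂ)) ^ 2)
      = ∑ l, ∑ j, ∑ j', (conj (v j) * v j') * (b l j * conj (b l j')) :=
        Finset.sum_congr rfl fun l _ => e1 l
    _ = ∑ j, ∑ j', (conj (v j) * v j') * ∑ l, b l j * conj (b l j') := by
        rw [Finset.sum_comm]
        refine Finset.sum_congr rfl fun j _ => ?_
        rw [Finset.sum_comm]
        refine Finset.sum_congr rfl fun j' _ => ?_
        rw [Finset.mul_sum]
    _ = ∑ j, ∑ j', (conj (v j) * v j') * (if j = j' then (1 : ℂ) else 0) := by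
        refine Finset.sum_congr rfl fun j _ => Finset.sum_congr rfl fun j' _ => ?_
        rw [hb j j']
    _ = ∑ j, conj (v j) * v j := by
        refine Finset.sum_congr rfl fun j _ => ?_
        simp [mul_ite]
    _ = ((vnormSq v : ℝ) : ℂ) := by
        rw [vnormSq]; push_cast
        refine Finset.sum_congr rfl fun j _ => ?_
        rw [← key]; push_cast; ring

end Aux16

/-- Lipschitz properties and bounds for `σ_max`. -/
theorem statement16
    {K N L s : ℕ} (hK : 0 < K) (hN : 0 < N) (hL : 0 < L) (hs : 0 < s)
    (b : Fin L → Fin K → ℂ)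
    (hbl : ∀ l, vnormSq (b l) = (K : ℝ) / L)
    (hKL : (K : ℝ) / L ≤ 1)
    (hb : BtBeqI b)
    (x : Fin s → Fin N → ℂ) (hx : ∀ i, vnorm (x i) = 1) :
    (∀ h u : Fin s → Fin K → ℂ,
        |sigmaMaxU b h - sigmaMaxU b u| ≤ stackNorm (fun i => h i - u i))
    ∧ (∀ h u : Fin s → Fin K → ℂ, stackNorm h = 1 → stackNorm u = 1 →
        |sigmaMaxU b h ^ 2 - sigmaMaxU b u ^ 2| ≤ 2 * stackNorm (fun i => h i - u i))
    ∧ (∀ h : Fin s → Fin K → ℂ, stackNorm h = 1 →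
        1 / (L : ℝ) ≤ sigmaMaxU b h ^ 2 ∧ sigmaMaxU b h ^ 2 ≤ (K : ℝ) / L) := by
  have hneL : Nonempty (Fin L) := ⟨⟨0, hL⟩⟩
  have bdd : ∀ g : Fin L → ℝ, BddAbove (Set.range g) := fun g => (Set.finite_range g).bddAbove
  set S : (Fin s → Fin K → ℂ) → Fin L → ℝ := fun h l => ∑ i, ‖vinner (b l) (h i)‖ ^ 2 with hS
  have hS_nonneg : ∀ h l, 0 ≤ S h l := fun h l => Finset.sum_nonneg fun _ _ => sq_nonneg _
  have sumSq_nonneg : ∀ h : Fin s → Fin K → ℂ, 0 ≤ ∑ i, vnormSq (h i) :=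
    fun h => Finset.sum_nonneg fun i _ => vnormSq_nonneg' (h i)
  have hCS : ∀ (l : Fin L) (v : Fin K → ℂ), ‖vinner (b l) v‖ ^ 2 ≤ ((K:ℝ)/L) * vnormSq v := by
    intro l v
    have h1 := norm_vinner_le' (b l) v
    calc ‖vinner (b l) v‖ ^ 2 ≤ (vnorm (b l) * vnorm v) ^ 2 :=
          pow_le_pow_left₀ (norm_nonneg _) h1 2
      _ = ((K:ℝ)/L) * vnormSq v := by
          rw [mul_pow, vnorm, Real.sq_sqrt (vnormSq_nonneg' _), hbl,
            vnorm, Real.sq_sqrt (vnormSq_nonneg' _)]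
  have hSbound : ∀ (h : Fin s → Fin K → ℂ) (l : Fin L),
      S h l ≤ ((K:ℝ)/L) * ∑ i, vnormSq (h i) := by
    intro h l
    rw [hS, Finset.mul_sum]
    exact Finset.sum_le_sum fun i _ => hCS l (h i)
  have hSbound1 : ∀ (h : Fin s → Fin K → ℂ) (l : Fin L), S h l ≤ ∑ i, vnormSq (h i) := by
    intro h l
    exact (hSbound h l).trans (mul_le_of_le_one_left (sumSq_nonneg h) hKL)
  have ftri : ∀ (h u : Fin s → Fin K → ℂ) (l : Fin L),
      Real.sqrt (S h l) ≤ Real.sqrt (S u l) + stackNorm (fun i => h i - u i) := by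
    intro h u l
    set W : (Fin s → Fin K → ℂ) → EuclideanSpace ℂ (Fin s) :=
      fun h => (WithLp.equiv 2 (Fin s → ℂ)).symm (fun i => vinner (b l) (h i)) with hW
    have hWnorm : ∀ h : Fin s → Fin K → ℂ, Real.sqrt (S h l) = ‖W h‖ := by
      intro h; rw [EuclideanSpace.norm_eq]; rfl
    have hsub : W h - W u = W (fun i => h i - u i) := by
      ext i
      show vinner (b l) (h i) - vinner (b l) (u i) = vinner (b l) (h i - u i)
      simp [vinner, Pi.sub_apply, mul_sub, Finset.sum_sub_distrib]
    have tri : ‖W h‖ ≤ ‖W u‖ + ‖W h - W u‖ := by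
      have : W h = W u + (W h - W u) := by abel
      calc ‖W h‖ = ‖W u + (W h - W u)‖ := by rw [← this]
        _ ≤ ‖W u‖ + ‖W h - W u‖ := norm_add_le _ _
    have hlast : ‖W h - W u‖ ≤ stackNorm (fun i => h i - u i) := by
      rw [hsub, ← hWnorm (fun i => h i - u i)]
      exact Real.sqrt_le_sqrt (hSbound1 _ l)
    rw [hWnorm h, hWnorm u]
    linarith
  have hsig : ∀ h : Fin s → Fin K → ℂ, sigmaMaxU b h = ⨆ l, Real.sqrt (S h l) := fun _ => rfl
  have sig_le_add : ∀ h u : Fin s → Fin K → ℂ,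
      sigmaMaxU b h ≤ sigmaMaxU b u + stackNorm (fun i => h i - u i) := by
    intro h u
    rw [hsig h, hsig u]
    exact ciSup_le fun l => (ftri h u l).trans (add_le_add_left (le_ciSup (f := fun l => Real.sqrt (S u l)) (bdd _) l) _)
  have stack_symm : ∀ h u : Fin s → Fin K → ℂ,
      stackNorm (fun i => h i - u i) = stackNorm (fun i => u i - h i) := by
    intro h u
    unfold stackNorm vnormSq
    congr 1
    refine Finset.sum_congr rfl fun i _ => Finset.sum_congr rfl fun j _ => ?_
    simp [norm_sub_rev]
  have part1 : ∀ h u : Fin s → Fin K → ℂ,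
      |sigmaMaxU b h - sigmaMaxU b u| ≤ stackNorm (fun i => h i - u i) := by
    intro h u
    rw [abs_sub_le_iff]
    refine ⟨by linarith [sig_le_add h u], ?_⟩
    rw [stack_symm h u]
    linarith [sig_le_add u h]
  have sig_nonneg : ∀ h : Fin s → Fin K → ℂ, 0 ≤ sigmaMaxU b h := by
    intro h
    rw [hsig h]
    exact (Real.sqrt_nonneg (S h ⟨0, hL⟩)).trans (le_ciSup (f := fun l => Real.sqrt (S h l)) (bdd _) ⟨0, hL⟩)
  have stack_nonneg : ∀ u : Fin s → Fin K → ℂ, 0 ≤ stackNorm u := fun u => Real.sqrt_nonneg _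
  have sig_le_one : ∀ h : Fin s → Fin K → ℂ, stackNorm h = 1 → sigmaMaxU b h ≤ 1 := by
    intro h hh
    rw [hsig h]
    refine ciSup_le fun l => ?_
    calc Real.sqrt (S h l) ≤ Real.sqrt (∑ i, vnormSq (h i)) := Real.sqrt_le_sqrt (hSbound1 h l)
      _ = 1 := hh
  refine ⟨part1, fun h u hh hu => ?_, fun h hh => ?_⟩
  · have e : sigmaMaxU b h ^ 2 - sigmaMaxU b u ^ 2
        = (sigmaMaxU b h - sigmaMaxU b u) * (sigmaMaxU b h + sigmaMaxU b u) := by ring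
    rw [e, abs_mul]
    have h2 : |sigmaMaxU b h + sigmaMaxU b u| ≤ 2 := by
      rw [abs_of_nonneg (add_nonneg (sig_nonneg h) (sig_nonneg u))]
      linarith [sig_le_one h hh, sig_le_one u hu]
    calc |sigmaMaxU b h - sigmaMaxU b u| * |sigmaMaxU b h + sigmaMaxU b u|
        ≤ stackNorm (fun i => h i - u i) * 2 :=
          mul_le_mul (part1 h u) h2 (abs_nonneg _) (stack_nonneg _)
      _ = 2 * stackNorm (fun i => h i - u i) := by ring
  · have hsum1 : ∑ i, vnormSq (h i) = 1 := by
      have h2 := Real.sq_sqrt (sumSq_nonneg h)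
      rw [show Real.sqrt (∑ i, vnormSq (h i)) = stackNorm h from rfl, hh] at h2
      simpa using h2.symm
    obtain ⟨l0, hl0⟩ := Finite.exists_max (S h)
    have hsup : sigmaMaxU b h = Real.sqrt (S h l0) := by
      rw [hsig h]
      exact le_antisymm (ciSup_le fun l => Real.sqrt_le_sqrt (hl0 l)) (le_ciSup (f := fun l => Real.sqrt (S h l)) (bdd _) l0)
    have hsq : sigmaMaxU b h ^ 2 = S h l0 := by rw [hsup, Real.sq_sqrt (hS_nonneg h l0)]
    have hLpos : (0:ℝ) < L := by exact_mod_cast hL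
    constructor
    · rw [hsq]
      have hsumS : ∑ l, S h l = 1 := by
        rw [hS]
        rw [Finset.sum_comm]
        rw [show (∑ i, ∑ l, ‖vinner (b l) (h i)‖ ^ 2) = ∑ i, vnormSq (h i) from
          Finset.sum_congr rfl fun i _ => sum_sq_vinner b hb (h i), hsum1]
      have hmax : (1:ℝ) ≤ L * S h l0 := by
        rw [← hsumS]
        calc ∑ l, S h l ≤ ∑ _l : Fin L, S h l0 := Finset.sum_le_sum fun l _ => hl0 l
          _ = L * S h l0 := by simp [Finset.sum_const, nsmul_eq_mul, Finset.card_univ]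
      rw [div_le_iff₀ hLpos]
      linarith
    · rw [hsq]
      calc S h l0 ≤ ((K:ℝ)/L) * ∑ i, vnormSq (h i) := hSbound h l0
        _ = (K:ℝ)/L := by rw [hsum1, mul_one]


end RGD
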